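/- Let p, q ∈ (0,1/2) and δ ∈ [q, 1−q]. Then inf_{θ∈[0,1]} { θ·D(1/2‖p) + inf_{w∈[0,1−δ]} I_θ(w) } = inf_{θ∈[0,(δ−q)/((1−q)−q)]} { θ·D(1/2‖p) + I_θ(1−δ) }. -/

import Mathlib

noncomputable section

/-- Kullback–Leibler divergence `D(1/2 ‖ p)` between Bernoulli(1/2) and Bernoulli(p). -/
def Dhalf (p : ℝ) : ℝ := (1/2) * Real.log ((1/2)/p) + (1/2) * Real.log ((1/2)/(1-p))

/-- `τ(q,θ,w) = ((1−q)/q)((1−θ)−w) + (q/(1−q))(θ−w)`. -/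
def tauF (q θ w : ℝ) : ℝ := (1-q)/q * ((1-θ) - w) + q/(1-q) * (θ - w)

/-- `η(q,θ,w) = (−τ + √(τ² + 4w(1−w)))/(2(1−w))`. -/
def etaF (q θ w : ℝ) : ℝ :=
  (-(tauF q θ w) + Real.sqrt ((tauF q θ w)^2 + 4*w*(1-w))) / (2*(1-w))

/-- The rate function `I_θ(w) = w log η − (1−θ) log((1−q)η + q) − θ log(qη + (1−q))`. -/
def rateI (q θ w : ℝ) : ℝ :=
  w * Real.log (etaF q θ w) - (1-θ) * Real.log ((1-q) * etaF q θ w + q)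
    - θ * Real.log (q * etaF q θ w + (1-q))



open Real Set

lemma eta_pos {q θ w : ℝ} (hw0 : 0 < w) (hw1 : w < 1) : 0 < etaF q θ w := by
  unfold etaF
  apply div_pos _ (by linarith)
  have h : |tauF q θ w| < Real.sqrt ((tauF q θ w)^2 + 4*w*(1-w)) := by
    rw [← Real.sqrt_sq_eq_abs]
    apply Real.sqrt_lt_sqrt (sq_nonneg _)
    nlinarith
  have := le_abs_self (tauF q θ w)
  linarith
lemma eta_quad {q θ w : ℝ} (hw0 : 0 ≤ w) (hw1 : w < 1) :
    (1-w) * (etaF q θ w)^2 + tauF q θ w * etaF q θ w - w = 0 := by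
  set τ := tauF q θ w with hτ
  have hs : Real.sqrt (τ^2 + 4*w*(1-w)) ^ 2 = τ^2 + 4*w*(1-w) :=
    Real.sq_sqrt (by nlinarith)
  have he : etaF q θ w = (-τ + Real.sqrt (τ^2 + 4*w*(1-w))) / (2*(1-w)) := rfl
  rw [he]
  have h1 : (1:ℝ) - w ≠ 0 := by linarith
  field_simp
  rw [show τ^2 + w*(1-w)*4 = τ^2 + 4*w*(1-w) by ring]
  nlinarith [hs]
lemma eta_le_one {q θ w : ℝ} (hw0 : 0 ≤ w) (hw1 : w < 1)
    (h : 0 ≤ 1 - 2*w + tauF q θ w) : etaF q θ w ≤ 1 := by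
  set τ := tauF q θ w with hτ
  have he : etaF q θ w = (-τ + Real.sqrt (τ^2 + 4*w*(1-w))) / (2*(1-w)) := rfl
  rw [he, div_le_one (by linarith)]
  have hs : Real.sqrt (τ^2 + 4*w*(1-w)) ≤ 2*(1-w) + τ := by
    rw [show (2*(1-w)+τ) = Real.sqrt ((2*(1-w)+τ)^2) from (Real.sqrt_sq (by linarith)).symm]
    apply Real.sqrt_le_sqrt
    nlinarith
  linarith
lemma eta_at_mean {q θ w : ℝ} (hq : 0 < q) (hq1 : q < 1) (hw1 : w < 1)
    (hm : 1 - 2*w + tauF q θ w = 0) : etaF q θ w = 1 := by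
  set τ := tauF q θ w with hτ
  have hτw : τ = 2*w - 1 := by linarith
  have he : etaF q θ w = (-τ + Real.sqrt (τ^2 + 4*w*(1-w))) / (2*(1-w)) := rfl
  rw [he, hτw]
  have : (2*w-1)^2 + 4*w*(1-w) = 1 := by ring
  rw [this, Real.sqrt_one, div_eq_one_iff_eq (by intro h; nlinarith : 2*(1-w) ≠ 0)]
  ring

lemma hasDerivAt_logterm (a b : ℝ) (ha : 0 < a) (hb : 0 < b) (x : ℝ) :
    HasDerivAt (fun l => Real.log (a * Real.exp l + b))
      (a * Real.exp x / (a * Real.exp x + b)) x := by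
  have h1 : HasDerivAt (fun l => a * Real.exp l + b) (a * Real.exp x) x :=
    ((Real.hasDerivAt_exp x).const_mul a).add_const b
  have h2 := h1.log (by positivity)
  simpa using h2
lemma frac_mono {a b : ℝ} (ha : 0 < a) (hb : 0 < b) {l1 l2 : ℝ} (h : l1 ≤ l2) :
    a * Real.exp l1 / (a * Real.exp l1 + b) ≤ a * Real.exp l2 / (a * Real.exp l2 + b) := by
  have e1 := Real.exp_pos l1
  have e2 := Real.exp_pos l2
  have he : Real.exp l1 ≤ Real.exp l2 := Real.exp_le_exp.mpr h
  rw [div_le_div_iff₀ (by positivity) (by positivity)]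
  nlinarith [mul_nonneg (mul_nonneg ha.le hb.le) (sub_nonneg.mpr he)]
/-- central lemma: the formulaic `etaF` maximizes the tilted functional. -/
lemma fle (q θ w x : ℝ) (hq : q ∈ Ioo (0:ℝ) (1/2)) (hθ : θ ∈ Icc (0:ℝ) 1)
    (hw : w ∈ Ioo (0:ℝ) 1) (hx : 0 < x) :
    w * Real.log x - (1-θ) * Real.log ((1-q)*x + q) - θ * Real.log (q*x + (1-q))
      ≤ rateI q θ w := by
  obtain ⟨hq0, hq2⟩ := hq
  obtain ⟨hθ0, hθ1⟩ := hθ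
  obtain ⟨hw0, hw1⟩ := hw
  have hq1 : q < 1 := by linarith
  have hr0 : 0 < 1 - q := by linarith
  set η := etaF q θ w with hηdef
  have hηpos : 0 < η := eta_pos hw0 hw1
  have hquad := eta_quad (q := q) (θ := θ) (le_of_lt hw0) hw1
  rw [← hηdef] at hquad
  -- polynomial form of the quadratic
  have hpoly : q*(1-q)*(1-w)*η^2 + ((1-q)^2*((1-θ)-w) + q^2*(θ-w))*η - q*(1-q)*w = 0 := by
    have h := hquad
    unfold tauF at h
    field_simp at h
    nlinarith [h]
  set h : ℝ → ℝ := fun l => w*l - (1-θ)*Real.log ((1-q)*Real.exp l + q)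
      - θ*Real.log (q*Real.exp l + (1-q)) with hh
  set d : ℝ → ℝ := fun l => w - (1-θ)*((1-q)*Real.exp l/((1-q)*Real.exp l + q))
      - θ*(q*Real.exp l/(q*Real.exp l + (1-q))) with hd
  have hderiv : ∀ l, HasDerivAt h (d l) l := by
    intro l
    exact (((hasDerivAt_id l).const_mul w).sub
      ((hasDerivAt_logterm (1-q) q hr0 hq0 l).const_mul (1-θ))).sub
      ((hasDerivAt_logterm q (1-q) hq0 hr0 l).const_mul θ) |>.congr_deriv (by rw [hd]; ring)
  have hanti : ∀ l1 l2, l1 ≤ l2 → d l2 ≤ d l1 := by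
    intro l1 l2 hl
    have h1 := frac_mono hr0 hq0 hl
    have h2 := frac_mono hq0 hr0 hl
    simp only [hd]
    have := mul_le_mul_of_nonneg_left h1 (by linarith : (0:ℝ) ≤ 1-θ)
    have := mul_le_mul_of_nonneg_left h2 hθ0
    linarith
  have hηexp : Real.exp (Real.log η) = η := Real.exp_log hηpos
  have hd1 : 0 < (1-q)*η + q := by positivity
  have hd2 : 0 < q*η + (1-q) := by positivity
  have hcrit : d (Real.log η) = 0 := by
    simp only [hd, hηexp]
    field_simp
    nlinarith [hpoly]
  -- h (log x) ≤ h (log η)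
  have key : h (Real.log x) ≤ h (Real.log η) := by
    rcases le_total (Real.log x) (Real.log η) with hc | hc
    · have hmono : MonotoneOn h (Icc (Real.log x) (Real.log η)) := by
        apply monotoneOn_of_deriv_nonneg (convex_Icc _ _)
          (fun l _ => (hderiv l).continuousAt.continuousWithinAt)
          (fun l hl => ((hderiv l).differentiableAt).differentiableWithinAt)
        intro l hl
        rw [(hderiv l).deriv]
        rw [interior_Icc] at hl
        have := hanti l (Real.log η) (le_of_lt hl.2)
        linarith [hcrit ▸ this]
      exact hmono (left_mem_Icc.mpr hc) (right_mem_Icc.mpr hc) hc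
    · have hmono : AntitoneOn h (Icc (Real.log η) (Real.log x)) := by
        apply antitoneOn_of_deriv_nonpos (convex_Icc _ _)
          (fun l _ => (hderiv l).continuousAt.continuousWithinAt)
          (fun l hl => ((hderiv l).differentiableAt).differentiableWithinAt)
        intro l hl
        rw [(hderiv l).deriv]
        rw [interior_Icc] at hl
        have := hanti (Real.log η) l (le_of_lt hl.1)
        linarith [hcrit ▸ this]
      exact hmono (left_mem_Icc.mpr hc) (right_mem_Icc.mpr hc) hc
  have hx' : Real.exp (Real.log x) = x := Real.exp_log hx
  simp only [hh, hηexp, hx'] at key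
  exact key

/-- value at `w = 0`. -/
lemma eta_zero {q θ : ℝ} (hq : q ∈ Ioo (0:ℝ) (1/2)) (hθ : θ ∈ Icc (0:ℝ) 1) :
    etaF q θ 0 = 0 := by
  obtain ⟨hq0, hq2⟩ := hq
  have hr0 : 0 < 1 - q := by linarith
  have hτ : 0 ≤ tauF q θ 0 := by
    unfold tauF
    have h1 : 0 ≤ (1-q)/q * ((1-θ) - 0) := by
      apply mul_nonneg (le_of_lt (div_pos hr0 hq0)); linarith [hθ.2]
    have h2 : 0 ≤ q/(1-q) * (θ - 0) := by
      apply mul_nonneg (le_of_lt (div_pos hq0 hr0)); linarith [hθ.1]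
    linarith
  unfold etaF
  rw [show (tauF q θ 0)^2 + 4*0*(1-0) = (tauF q θ 0)^2 by ring, Real.sqrt_sq hτ]
  simp
lemma fle0 (q θ x : ℝ) (hq : q ∈ Ioo (0:ℝ) (1/2)) (hθ : θ ∈ Icc (0:ℝ) 1) (hx : 0 < x) :
    0 * Real.log x - (1-θ) * Real.log ((1-q)*x + q) - θ * Real.log (q*x + (1-q))
      ≤ rateI q θ 0 := by
  obtain ⟨hq0, hq2⟩ := hq
  have hr0 : 0 < 1 - q := by linarith
  have he := eta_zero ⟨hq0, hq2⟩ hθ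
  unfold rateI
  rw [he]
  have h1 : Real.log q ≤ Real.log ((1-q)*x + q) :=
    Real.log_le_log hq0 (by nlinarith)
  have h2 : Real.log (1-q) ≤ Real.log (q*x + (1-q)) :=
    Real.log_le_log hr0 (by nlinarith)
  have m1 := mul_le_mul_of_nonneg_left h1 (by linarith [hθ.2] : (0:ℝ) ≤ 1-θ)
  have m2 := mul_le_mul_of_nonneg_left h2 hθ.1
  simp only [mul_zero, zero_mul, zero_add, mul_one]
  linarith
/-- combined: for all w in [0,1). -/
lemma fle' (q θ w x : ℝ) (hq : q ∈ Ioo (0:ℝ) (1/2)) (hθ : θ ∈ Icc (0:ℝ) 1)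
    (hw : w ∈ Ico (0:ℝ) 1) (hx : 0 < x) :
    w * Real.log x - (1-θ) * Real.log ((1-q)*x + q) - θ * Real.log (q*x + (1-q))
      ≤ rateI q θ w := by
  rcases eq_or_lt_of_le hw.1 with h0 | h0
  · rw [← h0]; exact fle0 q θ x hq hθ hx
  · exact fle q θ w x hq hθ ⟨h0, hw.2⟩ hx
lemma rate_nonneg (q θ w : ℝ) (hq : q ∈ Ioo (0:ℝ) (1/2)) (hθ : θ ∈ Icc (0:ℝ) 1)
    (hw : w ∈ Ico (0:ℝ) 1) : 0 ≤ rateI q θ w := by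
  have := fle' q θ w 1 hq hθ hw one_pos
  rw [show (1-q)*1 + q = 1 - q + q by ring, show q*1 + (1-q) = q + (1-q) by ring] at this
  rw [show (1:ℝ) - q + q = 1 by ring, show q + ((1:ℝ)-q) = 1 by ring, Real.log_one] at this
  simpa using this
/-- identity: 1 - 2w + τ = (m - w) * C -/
lemma tau_identity (q θ w : ℝ) (hq0 : 0 < q) (hq2 : q < 1/2) :
    1 - 2*w + tauF q θ w
      = (((1-θ)*(1-q) + θ*q) - w) * (2 + (1-q)/q + q/(1-q)) := by
  have h1 : q ≠ 0 := ne_of_gt hq0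
  have h2 : (1:ℝ) - q ≠ 0 := by intro h; nlinarith
  unfold tauF
  field_simp
  ring
lemma rate_zero (q θ : ℝ) (hq : q ∈ Ioo (0:ℝ) (1/2)) (hθ : θ ∈ Icc (0:ℝ) 1) :
    rateI q θ ((1-θ)*(1-q) + θ*q) = 0 := by
  obtain ⟨hq0, hq2⟩ := hq
  set w := (1-θ)*(1-q) + θ*q with hw
  have hw1 : w < 1 := by nlinarith [hθ.1, hθ.2]
  have hm : 1 - 2*w + tauF q θ w = 0 := by
    rw [tau_identity q θ w hq0 hq2, ← hw]; ring
  have he := eta_at_mean hq0 (by linarith) hw1 hm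
  unfold rateI
  rw [he]
  rw [show (1-q)*1 + q = 1 by ring, show q*1 + (1-q) = 1 by ring, Real.log_one]
  ring
/-- monotonicity below the mean -/
lemma rate_mono (q θ w w' : ℝ) (hq : q ∈ Ioo (0:ℝ) (1/2)) (hθ : θ ∈ Icc (0:ℝ) 1)
    (hw0 : 0 ≤ w) (hww : w ≤ w') (hw'0 : 0 < w') (hw'1 : w' < 1)
    (hmean : w' ≤ (1-θ)*(1-q) + θ*q) :
    rateI q θ w' ≤ rateI q θ w := by
  obtain ⟨hq0, hq2⟩ := hq
  have hC : 0 < 2 + (1-q)/q + q/(1-q) := by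
    have := div_pos (show (0:ℝ) < 1-q by linarith) hq0
    have := div_pos hq0 (show (0:ℝ) < 1-q by linarith)
    linarith
  have hg1 : 0 ≤ 1 - 2*w' + tauF q θ w' := by
    rw [tau_identity q θ w' hq0 hq2]
    exact mul_nonneg (by linarith) hC.le
  have hη1 : etaF q θ w' ≤ 1 := eta_le_one hw'0.le hw'1 hg1
  have hηpos : 0 < etaF q θ w' := eta_pos hw'0 hw'1
  have hlog : Real.log (etaF q θ w') ≤ 0 := Real.log_nonpos hηpos.le hη1
  have h := fle' q θ w (etaF q θ w') ⟨hq0, hq2⟩ hθ ⟨hw0, lt_of_le_of_lt hww hw'1⟩ hηpos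
  have hexpand : w * Real.log (etaF q θ w') - (1-θ) * Real.log ((1-q)*(etaF q θ w') + q)
      - θ * Real.log (q*(etaF q θ w') + (1-q))
      = rateI q θ w' + (w - w') * Real.log (etaF q θ w') := by
    unfold rateI; ring
  rw [hexpand] at h
  nlinarith [mul_nonneg (sub_nonneg.mpr hww) (neg_nonneg.mpr hlog)]

lemma Dhalf_nonneg {p : ℝ} (hp : p ∈ Ioo (0:ℝ) (1/2)) : 0 ≤ Dhalf p := by
  obtain ⟨hp0, hp2⟩ := hp
  have hp1 : 0 < 1 - p := by linarith
  have h1 : Dhalf p = (1/2) * Real.log ((1/2)/p * ((1/2)/(1-p))) := by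
    unfold Dhalf
    rw [Real.log_mul (by positivity) (by positivity)]
    ring
  rw [h1]
  apply mul_nonneg (by norm_num)
  apply Real.log_nonneg
  rw [div_mul_div_comm]
  rw [le_div_iff₀ (by positivity)]
  nlinarith

/-- For `p, q ∈ (0,1/2)` and `δ ∈ [q, 1−q]`,
`inf_{θ∈[0,1]} {θ·D(1/2‖p) + inf_{w∈[0,1−δ]} I_θ(w)}
  = inf_{θ∈[0,(δ−q)/((1−q)−q)]} {θ·D(1/2‖p) + I_θ(1−δ)}`. -/
theorem stmt6 (p q δ : ℝ) (hp : p ∈ Set.Ioo (0:ℝ) (1/2)) (hq : q ∈ Set.Ioo (0:ℝ) (1/2))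
    (hδ : δ ∈ Set.Icc q (1-q)) :
    sInf ((fun θ => θ * Dhalf p + sInf ((fun w => rateI q θ w) '' Set.Icc 0 (1-δ)))
        '' Set.Icc (0:ℝ) 1)
      = sInf ((fun θ => θ * Dhalf p + rateI q θ (1-δ))
        '' Set.Icc (0:ℝ) ((δ - q)/((1-q) - q))) := by
  obtain ⟨hq0, hq2⟩ := hq
  obtain ⟨hδ1, hδ2⟩ := hδ
  have h2q : 0 < 1 - 2*q := by linarith
  set θ₀ := (δ - q)/((1-q) - q) with hθ₀def
  have hθ₀0 : 0 ≤ θ₀ := div_nonneg (by linarith) (by linarith)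
  have hθ₀1 : θ₀ ≤ 1 := by
    rw [div_le_one (by linarith)]; linarith
  have hδpos : 0 < 1 - δ := by linarith
  have hδlt1 : 1 - δ < 1 := by linarith
  have hD : 0 ≤ Dhalf p := Dhalf_nonneg hp
  -- mean identity: for θ, mean = (1-q) - θ(1-2q); at θ₀ equals 1-δ
  have hmean₀ : (1-θ₀)*(1-q) + θ₀*q = 1 - δ := by
    have : θ₀ * ((1-q) - q) = δ - q := by
      rw [hθ₀def, div_mul_cancel₀]; linarith
    nlinarith [this]
  have hmono_mean : ∀ θ, θ ≤ θ₀ → 1 - δ ≤ (1-θ)*(1-q) + θ*q := by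
    intro θ hθ
    rw [← hmean₀]; nlinarith
  -- inner infimum facts
  have hIcc_ne : (Icc (0:ℝ) (1-δ)).Nonempty := ⟨0, by constructor <;> linarith⟩
  have hInner_bdd : ∀ θ, θ ∈ Icc (0:ℝ) 1 →
      ∀ y ∈ (fun w => rateI q θ w) '' Icc 0 (1-δ), 0 ≤ y := by
    rintro θ hθ y ⟨w, hw, rfl⟩
    exact rate_nonneg q θ w ⟨hq0, hq2⟩ hθ ⟨hw.1, lt_of_le_of_lt hw.2 hδlt1⟩
  have hInner_nonneg : ∀ θ, θ ∈ Icc (0:ℝ) 1 →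
      0 ≤ sInf ((fun w => rateI q θ w) '' Icc 0 (1-δ)) := by
    intro θ hθ
    exact le_csInf (hIcc_ne.image _) (hInner_bdd θ hθ)
  have hInner_le : ∀ θ, θ ∈ Icc (0:ℝ) 1 →
      sInf ((fun w => rateI q θ w) '' Icc 0 (1-δ)) ≤ rateI q θ (1-δ) := by
    intro θ hθ
    apply csInf_le ⟨0, fun y hy => hInner_bdd θ hθ y hy⟩
    exact ⟨1-δ, ⟨by linarith, le_refl _⟩, rfl⟩
  have hInner_ge : ∀ θ, θ ∈ Icc (0:ℝ) θ₀ →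
      rateI q θ (1-δ) ≤ sInf ((fun w => rateI q θ w) '' Icc 0 (1-δ)) := by
    rintro θ ⟨hθ0, hθθ₀⟩
    apply le_csInf (hIcc_ne.image _)
    rintro y ⟨w, hw, rfl⟩
    exact rate_mono q θ w (1-δ) ⟨hq0, hq2⟩ ⟨hθ0, le_trans hθθ₀ hθ₀1⟩
      hw.1 hw.2 hδpos hδlt1 (hmono_mean θ hθθ₀)
  -- RHS value at θ₀
  have hrate₀ : rateI q θ₀ (1-δ) = 0 := by
    rw [← hmean₀]; exact rate_zero q θ₀ ⟨hq0, hq2⟩ ⟨hθ₀0, hθ₀1⟩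
  -- nonemptiness and bddness of outer sets
  have hSne : ((fun θ => θ * Dhalf p + sInf ((fun w => rateI q θ w) '' Icc 0 (1-δ)))
      '' Icc (0:ℝ) 1).Nonempty := (nonempty_Icc.mpr (by norm_num)).image _
  have hTne : ((fun θ => θ * Dhalf p + rateI q θ (1-δ)) '' Icc (0:ℝ) θ₀).Nonempty :=
    (nonempty_Icc.mpr hθ₀0).image _
  have hSbdd : ∀ y ∈ (fun θ => θ * Dhalf p + sInf ((fun w => rateI q θ w) '' Icc 0 (1-δ)))
      '' Icc (0:ℝ) 1, 0 ≤ y := by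
    rintro y ⟨θ, hθ, rfl⟩
    dsimp only
    have := hInner_nonneg θ hθ
    have := mul_nonneg hθ.1 hD
    linarith
  have hTbdd : ∀ y ∈ (fun θ => θ * Dhalf p + rateI q θ (1-δ)) '' Icc (0:ℝ) θ₀, 0 ≤ y := by
    rintro y ⟨θ, hθ, rfl⟩
    dsimp only
    have h1 : θ ∈ Icc (0:ℝ) 1 := ⟨hθ.1, le_trans hθ.2 hθ₀1⟩
    have := rate_nonneg q θ (1-δ) ⟨hq0, hq2⟩ h1 ⟨by linarith, hδlt1⟩
    have := mul_nonneg hθ.1 hD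
    linarith
  apply le_antisymm
  · -- sInf S ≤ sInf T
    apply le_csInf hTne
    rintro b ⟨θ, hθ, rfl⟩
    have hθ1 : θ ∈ Icc (0:ℝ) 1 := ⟨hθ.1, le_trans hθ.2 hθ₀1⟩
    calc sInf _ ≤ θ * Dhalf p + sInf ((fun w => rateI q θ w) '' Icc 0 (1-δ)) :=
          csInf_le ⟨0, hSbdd⟩ ⟨θ, hθ1, rfl⟩
      _ ≤ θ * Dhalf p + rateI q θ (1-δ) := by linarith [hInner_le θ hθ1]
  · -- sInf T ≤ sInf S
    apply le_csInf hSne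
    rintro b ⟨θ, hθ, rfl⟩
    by_cases hc : θ ≤ θ₀
    · calc sInf _ ≤ θ * Dhalf p + rateI q θ (1-δ) :=
            csInf_le ⟨0, hTbdd⟩ ⟨θ, ⟨hθ.1, hc⟩, rfl⟩
        _ ≤ θ * Dhalf p + sInf ((fun w => rateI q θ w) '' Icc 0 (1-δ)) := by
            linarith [hInner_ge θ ⟨hθ.1, hc⟩]
    · push_neg at hc
      calc sInf _ ≤ θ₀ * Dhalf p + rateI q θ₀ (1-δ) :=
            csInf_le ⟨0, hTbdd⟩ ⟨θ₀, ⟨hθ₀0, le_refl _⟩, rfl⟩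
        _ = θ₀ * Dhalf p := by rw [hrate₀]; ring
        _ ≤ θ * Dhalf p + sInf ((fun w => rateI q θ w) '' Icc 0 (1-δ)) := by
            have := hInner_nonneg θ hθ
            have := mul_le_mul_of_nonneg_right hc.le hD
            linarith
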